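/- With the setup of Nesterov smoothing (f concave and L-Lipschitz on [0,1]^d in Euclidean norm, f̂_μ(z) = min_{‖θ‖ ≤ L}(f*(θ) + (μ/(2L))‖θ‖² − θ·z)), the minimizer θ(z) in the definition of f̂_μ satisfies ‖θ(x₁) − θ(x₂)‖ ≤ (L/μ)‖x₁ − x₂‖ for all x₁, x₂ ∈ [0,1]^d. Consequently ∇f̂_μ is (L/μ)-Lipschitz. -/

import Mathlib

/-- The cube `[0,1]^d` in Euclidean space. -/
def cube (d : ℕ) : Set (EuclideanSpace ℝ (Fin d)) := {y | ∀ i, y i ∈ Set.Icc (0 : ℝ) 1}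

/-- Exact quadratic identity for the squared norm along a segment. -/
lemma norm_sq_combo (d : ℕ) (a b : EuclideanSpace ℝ (Fin d)) (t : ℝ) :
    ‖(1-t) • a + t • b‖^2 = (1-t)*‖a‖^2 + t*‖b‖^2 - t*(1-t)*‖a-b‖^2 := by
  have h : ∀ x : EuclideanSpace ℝ (Fin d), ‖x‖^2 = (inner ℝ x x : ℝ) :=
    fun x => (real_inner_self_eq_norm_sq x).symm
  rw [h, h, h, h, inner_sub_sub_self, inner_add_add_self]
  simp only [real_inner_smul_left, real_inner_smul_right, real_inner_comm a b]
  ring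

lemma inner_combo (d : ℕ) (a b z : EuclideanSpace ℝ (Fin d)) (t : ℝ) :
    (inner ℝ ((1-t) • a + t • b) z : ℝ) = (1-t)*(inner ℝ a z : ℝ) + t*(inner ℝ b z : ℝ) := by
  rw [inner_add_left, real_inner_smul_left, real_inner_smul_left]

/-- The minimizer `θ(z)` in the definition of Nesterov's smooth approximation
`f̂_μ(z) = min_{‖θ‖ ≤ L}(f*(θ) + (μ/(2L))‖θ‖² − θ·z)` is `(L/μ)`-Lipschitz in `z`;
consequently `∇f̂_μ = −θ(·)` is `(L/μ)`-Lipschitz. -/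
theorem stmt_7 (d : ℕ) (L μ : ℝ) (hL : 0 < L) (hμ : 0 < μ)
    (f fstar : EuclideanSpace ℝ (Fin d) → ℝ)
    (hf : ConcaveOn ℝ (cube d) f)
    (hlip : ∀ x ∈ cube d, ∀ y ∈ cube d, |f x - f y| ≤ L * ‖x - y‖)
    (hfstar : ∀ θ, IsGreatest ((fun y => (inner ℝ y θ : ℝ) + f y) '' cube d) (fstar θ))
    (θfun : EuclideanSpace ℝ (Fin d) → EuclideanSpace ℝ (Fin d))
    (hθmem : ∀ z, ‖θfun z‖ ≤ L)
    (hθmin : ∀ z, ∀ θ, ‖θ‖ ≤ L →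
        fstar (θfun z) + μ / (2 * L) * ‖θfun z‖ ^ 2 - (inner ℝ (θfun z) z : ℝ) ≤
          fstar θ + μ / (2 * L) * ‖θ‖ ^ 2 - (inner ℝ θ z : ℝ)) :
    ∀ x₁ ∈ cube d, ∀ x₂ ∈ cube d, ‖θfun x₁ - θfun x₂‖ ≤ L / μ * ‖x₁ - x₂‖ := by
  intro x₁ _ x₂ _
  set c : ℝ := μ / (2 * L) with hc
  have hcpos : 0 < c := div_pos hμ (by linarith)
  -- fstar is convex along segments
  have hfconv : ∀ (a b : EuclideanSpace ℝ (Fin d)) (t : ℝ), 0 ≤ t → t ≤ 1 →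
      fstar ((1-t) • a + t • b) ≤ (1-t) * fstar a + t * fstar b := by
    intro a b t ht0 ht1
    obtain ⟨y, hy, hyval⟩ := (hfstar ((1-t) • a + t • b)).1
    have ha : (inner ℝ y a : ℝ) + f y ≤ fstar a := (hfstar a).2 ⟨y, hy, rfl⟩
    have hb : (inner ℝ y b : ℝ) + f y ≤ fstar b := (hfstar b).2 ⟨y, hy, rfl⟩
    have hval : (inner ℝ y ((1-t) • a + t • b) : ℝ) = (1-t)*(inner ℝ y a : ℝ) + t*(inner ℝ y b : ℝ) := by
      rw [inner_add_right, real_inner_smul_right, real_inner_smul_right]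
    have h1t : (0:ℝ) ≤ 1 - t := by linarith
    calc fstar ((1-t) • a + t • b) = (inner ℝ y ((1-t) • a + t • b) : ℝ) + f y := hyval.symm
      _ = (1-t) * ((inner ℝ y a : ℝ) + f y) + t * ((inner ℝ y b : ℝ) + f y) := by rw [hval]; ring
      _ ≤ (1-t) * fstar a + t * fstar b := by gcongr
  -- quadratic growth at the minimizer (up to factor (1-t))
  have key : ∀ (z θ : EuclideanSpace ℝ (Fin d)), ‖θ‖ ≤ L → ∀ t : ℝ, 0 < t → t < 1 →
      c * (1-t) * ‖θ - θfun z‖^2 ≤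
        (fstar θ + c * ‖θ‖^2 - (inner ℝ θ z : ℝ))
          - (fstar (θfun z) + c * ‖θfun z‖^2 - (inner ℝ (θfun z) z : ℝ)) := by
    intro z θ hθ t ht0 ht1
    have hθmL : ‖(1-t) • θfun z + t • θ‖ ≤ L := by
      have h1 : ‖(1-t) • θfun z + t • θ‖ ≤ ‖(1-t) • θfun z‖ + ‖t • θ‖ := norm_add_le _ _
      have h2 : ‖(1-t) • θfun z‖ = (1-t) * ‖θfun z‖ := by
        rw [norm_smul, Real.norm_eq_abs, abs_of_pos (by linarith : (0:ℝ) < 1 - t)]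
      have h3 : ‖t • θ‖ = t * ‖θ‖ := by
        rw [norm_smul, Real.norm_eq_abs, abs_of_pos ht0]
      have h4 := hθmem z
      nlinarith
    have hmin := hθmin z ((1-t) • θfun z + t • θ) hθmL
    have hnorm := norm_sq_combo d (θfun z) θ t
    have hinner := inner_combo d (θfun z) θ z t
    have hconv := hfconv (θfun z) θ t (le_of_lt ht0) (le_of_lt ht1)
    have hrevsq : ‖θfun z - θ‖^2 = ‖θ - θfun z‖^2 := by rw [norm_sub_rev]
    have step : t * (c * (1-t) * ‖θ - θfun z‖^2) ≤
        t * ((fstar θ + c * ‖θ‖^2 - (inner ℝ θ z : ℝ))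
          - (fstar (θfun z) + c * ‖θfun z‖^2 - (inner ℝ (θfun z) z : ℝ))) := by
      rw [hnorm, hinner] at hmin
      rw [hrevsq] at hmin
      nlinarith [hmin, hconv, hcpos.le]
    exact le_of_mul_le_mul_left step ht0
  have h12 : ∀ t : ℝ, 0 < t → t < 1 →
      2 * c * (1-t) * ‖θfun x₁ - θfun x₂‖^2 ≤ (inner ℝ (θfun x₁ - θfun x₂) (x₁ - x₂) : ℝ) := by
    intro t ht0 ht1
    have k1 := key x₁ (θfun x₂) (hθmem x₂) t ht0 ht1
    have k2 := key x₂ (θfun x₁) (hθmem x₁) t ht0 ht1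
    have hrevsq : ‖θfun x₂ - θfun x₁‖^2 = ‖θfun x₁ - θfun x₂‖^2 := by rw [norm_sub_rev]
    rw [hrevsq] at k1
    have hinner : (inner ℝ (θfun x₁ - θfun x₂) (x₁ - x₂) : ℝ)
        = (inner ℝ (θfun x₁) x₁ : ℝ) - (inner ℝ (θfun x₂) x₁ : ℝ)
          - (inner ℝ (θfun x₁) x₂ : ℝ) + (inner ℝ (θfun x₂) x₂ : ℝ) := by
      rw [inner_sub_left, inner_sub_right, inner_sub_right]; ring
    rw [hinner]
    linarith [k1, k2]
  have hCS : (inner ℝ (θfun x₁ - θfun x₂) (x₁ - x₂) : ℝ) ≤ ‖θfun x₁ - θfun x₂‖ * ‖x₁ - x₂‖ :=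
    real_inner_le_norm _ _
  -- pass to the limit t → 0
  have hlim : 2 * c * ‖θfun x₁ - θfun x₂‖^2 ≤ ‖θfun x₁ - θfun x₂‖ * ‖x₁ - x₂‖ := by
    by_contra hcon
    push_neg at hcon
    set A := 2 * c * ‖θfun x₁ - θfun x₂‖^2 with hA
    set B := ‖θfun x₁ - θfun x₂‖ * ‖x₁ - x₂‖ with hB
    have hApos : 0 < A := lt_of_le_of_lt (by positivity) hcon
    set t := min (1/2 : ℝ) ((A - B) / (2 * A)) with htdef
    have ht0 : 0 < t := lt_min (by norm_num) (div_pos (by linarith) (by linarith))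
    have ht1 : t < 1 := lt_of_le_of_lt (min_le_left _ _) (by norm_num)
    have h2 : A - t * A ≤ B := by
      have h := le_trans (h12 t ht0 ht1) hCS
      calc A - t * A = 2 * c * (1-t) * ‖θfun x₁ - θfun x₂‖^2 := by rw [hA]; ring
        _ ≤ B := h
    have htle : t ≤ (A - B) / (2 * A) := min_le_right _ _
    have h3 : t * A ≤ ((A - B)/(2*A)) * A :=
      mul_le_mul_of_nonneg_right htle (le_of_lt hApos)
    have h4 : ((A - B)/(2*A)) * A = (A - B) / 2 := by field_simp
    rw [h4] at h3
    linarith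
  have h2c : 2 * c = μ / L := by rw [hc]; field_simp
  rw [h2c] at hlim
  rcases eq_or_lt_of_le (norm_nonneg (θfun x₁ - θfun x₂)) with h0 | h0
  · rw [← h0]; positivity
  · have h1 : μ * (‖θfun x₁ - θfun x₂‖ * ‖θfun x₁ - θfun x₂‖)
        ≤ L * ‖x₁ - x₂‖ * ‖θfun x₁ - θfun x₂‖ := by
      rw [div_mul_eq_mul_div, div_le_iff₀ hL] at hlim
      nlinarith [hlim]
    have h5 : μ * ‖θfun x₁ - θfun x₂‖ ≤ L * ‖x₁ - x₂‖ := by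
      have := (mul_le_mul_iff_of_pos_right h0).mp (by linarith [h1] :
        μ * ‖θfun x₁ - θfun x₂‖ * ‖θfun x₁ - θfun x₂‖
          ≤ L * ‖x₁ - x₂‖ * ‖θfun x₁ - θfun x₂‖)
      exact this
    rw [div_mul_eq_mul_div, le_div_iff₀ hμ]
    linarith
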